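/- arXiv:2404.01601 — 5 statements merged into one kernel-verified Lean document; each statement's English description precedes it below -/
import Mathlib

section
/- Let x0, …, x_{N-1} be vectors in R^d such that every pair x_i, x_j (i ≠ j) is linearly independent, and let y : [N] → [N] be an injective labeling. Then there exists a matrix W ∈ R^{d × N} such that for every i and every j ≠ y(i), (x_i^T W)[y(i)] > (x_i^T W)[j]. -/
open scoped RealInnerProductSpace

theorem stmt_2 {d N : ℕ} (x : Fin N → Fin d → ℝ)
    (hx : ∀ i j : Fin N, i ≠ j → LinearIndependent ℝ ![x i, x j])
    (y : Fin N → Fin N) (hy : Function.Injective y) :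
    ∃ W : Matrix (Fin d) (Fin N) ℝ,
      ∀ i : Fin N, ∀ j : Fin N, j ≠ y i →
        Matrix.vecMul (x i) W (y i) > Matrix.vecMul (x i) W j := by
  -- view vectors in Euclidean space
  set v : Fin N → EuclideanSpace ℝ (Fin d) := fun i => WithLp.toLp 2 (x i) with hv
  set e : Fin N ≃ Fin N := Equiv.ofBijective y (Finite.injective_iff_bijective.mp hy) with he
  have hey : ∀ i, e i = y i := fun i => rfl
  refine ⟨fun k j => x (e.symm j) k / ‖v (e.symm j)‖, ?_⟩
  intro i j hj
  have hne : i ≠ e.symm j := by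
    intro h
    apply hj
    rw [h, ← hey, Equiv.apply_symm_apply]
  have hli := hx i (e.symm j) hne
  have hi0 : v i ≠ 0 := fun h => hli.ne_zero 0 (by simpa [hv] using congrArg WithLp.ofLp h)
  have hj0 : v (e.symm j) ≠ 0 := fun h => hli.ne_zero 1 (by simpa [hv] using congrArg WithLp.ofLp h)
  have hnpar : ‖v (e.symm j)‖ • v i ≠ ‖v i‖ • v (e.symm j) := by
    intro h
    have hsum : ‖v (e.symm j)‖ • v i + (-‖v i‖) • v (e.symm j) = 0 := by
      rw [neg_smul, ← sub_eq_add_neg, sub_eq_zero]; exact h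
    exact hj0 (norm_eq_zero.mp ((LinearIndependent.pair_iff.mp hli _ (-‖v i‖) (by simpa [hv, neg_smul] using congrArg WithLp.ofLp hsum)).1))
  have hcs : (inner ℝ (v i) (v (e.symm j)) : ℝ) < ‖v i‖ * ‖v (e.symm j)‖ := by
    exact inner_lt_norm_mul_iff_real.mpr hnpar
  have key : ∀ k : Fin N, Matrix.vecMul (x i)
      (fun k j => x (e.symm j) k / ‖v (e.symm j)‖ : Matrix (Fin d) (Fin N) ℝ) k
      = (inner ℝ (v i) (v (e.symm k)) : ℝ) / ‖v (e.symm k)‖ := by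
    intro k
    simp only [Matrix.vecMul, dotProduct, hv, PiLp.toLp_apply, PiLp.inner_apply, RCLike.inner_apply',
      starRingEnd_apply, star_trivial]
    rw [Finset.sum_div]
    exact Finset.sum_congr rfl fun _ _ => (mul_div_assoc _ _ _).symm
  have hji : e.symm (y i) = i := by rw [← hey]; exact e.symm_apply_apply i
  rw [key, key, hji]
  have hnormi : (inner ℝ (v i) (v i) : ℝ) / ‖v i‖ = ‖v i‖ := by
    rw [real_inner_self_eq_norm_mul_norm]
    field_simp
  rw [hnormi]
  rw [gt_iff_lt, div_lt_iff₀ (norm_pos_iff.mpr hj0)]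
  exact hcs
end

section
/- Let x0, …, x_{k-1}, x_k ∈ R^d be pairwise linearly independent, and suppose W = [w_0, …, w_{k-1}] ∈ R^{d × k} correctly classifies (x_i, i) for i < k by argmax. Then there exists Δw ∈ R^d and a scaling such that appending w_k = w_{i_k} + Δw (where i_k = argmax_j x_k^T w_j) yields a matrix in R^{d × (k+1)} that correctly classifies (x_i, i) for all i ≤ k by argmax. -/
open Matrix RealInnerProductSpace

lemma sep_aux {F : Type*} [NormedAddCommGroup F] [InnerProductSpace ℝ F]
    {a b : F} (h : LinearIndependent ℝ ![a, b]) :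
    ∃ v : F, 0 < ⟪a, v⟫ ∧ ⟪b, v⟫ < 0 := by
  have ha : a ≠ 0 := by
    intro h0
    exact one_ne_zero (LinearIndependent.pair_iff.1 h 1 0 (by simp [h0])).1
  have hb : b ≠ 0 := by
    intro h0
    exact one_ne_zero (LinearIndependent.pair_iff.1 h 0 1 (by simp [h0])).2
  have hcs : |⟪a, b⟫| < ‖a‖ * ‖b‖ := by
    rcases lt_or_eq_of_le (abs_real_inner_le_norm a b) with h' | h'
    · exact h'
    · exfalso
      rw [← Real.norm_eq_abs] at h'
      obtain ⟨r, hr, hba⟩ := (norm_inner_eq_norm_iff ha hb).1 h'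
      have := (LinearIndependent.pair_iff.1 h r (-1)
        (by rw [hba]; module)).2
      norm_num at this
  set v₀ : F := (‖b‖ ^ 2) • a - ⟪b, a⟫ • b with hv₀
  have hbv₀ : ⟪b, v₀⟫ = 0 := by
    simp [hv₀, inner_sub_right, inner_smul_right, real_inner_self_eq_norm_sq]
    ring
  have hav₀ : 0 < ⟪a, v₀⟫ := by
    have : ⟪a, v₀⟫ = ‖a‖ ^ 2 * ‖b‖ ^ 2 - ⟪a, b⟫ ^ 2 := by
      simp [hv₀, inner_sub_right, inner_smul_right, real_inner_self_eq_norm_sq,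
        real_inner_comm a b]
      ring
    rw [this]
    nlinarith [hcs, abs_nonneg ⟪a, b⟫, sq_abs ⟪a, b⟫,
      mul_nonneg (norm_nonneg a) (norm_nonneg b)]
  set δ : ℝ := ⟪a, v₀⟫ / (|⟪a, b⟫| + 1) with hδ
  have hA : (0:ℝ) < |⟪a, b⟫| + 1 := by positivity
  have hδpos : 0 < δ := div_pos hav₀ hA
  refine ⟨v₀ - δ • b, ?_, ?_⟩
  · rw [inner_sub_right, inner_smul_right]
    have h1 : δ * ⟪a, b⟫ ≤ δ * |⟪a, b⟫| := by
      exact mul_le_mul_of_nonneg_left (le_abs_self _) hδpos.le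
    have h2 : δ * (|⟪a, b⟫| + 1) = ⟪a, v₀⟫ := by
      rw [hδ]; exact div_mul_cancel₀ _ hA.ne'
    nlinarith
  · rw [inner_sub_right, inner_smul_right, hbv₀, real_inner_self_eq_norm_sq]
    have hbn : 0 < ‖b‖ := norm_pos_iff.2 hb
    have : 0 < ‖b‖ ^ 2 := by positivity
    nlinarith

lemma sep_dot {d : ℕ} {a b : Fin d → ℝ} (h : LinearIndependent ℝ ![a, b]) :
    ∃ v : Fin d → ℝ, 0 < a ⬝ᵥ v ∧ b ⬝ᵥ v < 0 := by
  let e := (WithLp.linearEquiv 2 ℝ (Fin d → ℝ)).symm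
  have h' : LinearIndependent ℝ ![e a, e b] := by
    have heq : ![e a, e b] = e ∘ ![a, b] := by
      funext i; fin_cases i <;> rfl
    rw [heq]
    exact h.map' e.toLinearMap e.ker
  obtain ⟨v, h1, h2⟩ := sep_aux h'
  refine ⟨v, ?_, ?_⟩
  · simpa [e, dotProduct, PiLp.inner_apply, RCLike.inner_apply, mul_comm] using h1
  · simpa [e, dotProduct, PiLp.inner_apply, RCLike.inner_apply, mul_comm] using h2

theorem stmt_4 {d k : ℕ} (x : Fin (k + 1) → Fin d → ℝ)
    (hx : ∀ i j : Fin (k + 1), i ≠ j → LinearIndependent ℝ ![x i, x j])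
    (w : Fin k → Fin d → ℝ)
    (hcorrect : ∀ i j : Fin k, j ≠ i →
      x i.castSucc ⬝ᵥ w i > x i.castSucc ⬝ᵥ w j)
    (ik : Fin k)
    (hik : ∀ j : Fin k, x (Fin.last k) ⬝ᵥ w j ≤ x (Fin.last k) ⬝ᵥ w ik) :
    ∃ Δw : Fin d → ℝ,
      ∀ i j : Fin (k + 1), j ≠ i →
        x i ⬝ᵥ (Fin.snoc w (w ik + Δw) : Fin (k + 1) → Fin d → ℝ) i >
        x i ⬝ᵥ (Fin.snoc w (w ik + Δw) : Fin (k + 1) → Fin d → ℝ) j := by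
  have hne : (Fin.last k) ≠ ik.castSucc := (Fin.castSucc_lt_last ik).ne'
  obtain ⟨v, hv1, hv2⟩ := sep_dot (hx _ _ hne)
  -- margins
  set m : Fin k → ℝ := fun i => x i.castSucc ⬝ᵥ w i - x i.castSucc ⬝ᵥ w ik with hm_def
  have hm : ∀ i : Fin k, i ≠ ik → 0 < m i := fun i hi =>
    sub_pos.2 (hcorrect i ik (fun h => hi h.symm))
  haveI : Nonempty (Fin k) := ⟨ik⟩
  set f : Fin k → ℝ := fun i =>
    if i = ik then 1 else m i / (|x i.castSucc ⬝ᵥ v| + 1) with hf_def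
  set ε : ℝ := Finset.univ.inf' Finset.univ_nonempty f with hε_def
  have hfpos : ∀ i : Fin k, 0 < f i := by
    intro i
    by_cases hi : i = ik
    · simp [hf_def, hi]
    · have h1 := hm i hi
      have h2 : (0:ℝ) < |x i.castSucc ⬝ᵥ v| + 1 := by positivity
      simp only [hf_def, if_neg hi]
      exact div_pos h1 h2
  have hεpos : 0 < ε := by
    rw [hε_def, Finset.lt_inf'_iff]
    exact fun i _ => hfpos i
  have hεle : ∀ i : Fin k, ε ≤ f i := fun i =>
    Finset.inf'_le f (Finset.mem_univ i)
  refine ⟨ε • v, ?_⟩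
  intro i j hji
  induction i using Fin.lastCases with
  | last =>
    have hL : (Fin.snoc w (w ik + ε • v) : Fin (k + 1) → Fin d → ℝ) (Fin.last k)
        = w ik + ε • v := Fin.snoc_last _ _
    rw [hL]
    induction j using Fin.lastCases with
    | last => exact absurd rfl hji
    | cast j' =>
      rw [Fin.snoc_castSucc]
      have := hik j'
      have h2 : 0 < ε * (x (Fin.last k) ⬝ᵥ v) := mul_pos hεpos hv1
      rw [dotProduct_add, dotProduct_smul, smul_eq_mul]
      linarith
  | cast i' =>
    rw [Fin.snoc_castSucc]
    induction j using Fin.lastCases with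
    | last =>
      rw [Fin.snoc_last, dotProduct_add, dotProduct_smul, smul_eq_mul]
      by_cases hi : i' = ik
      · subst hi
        have h2 : ε * (x i'.castSucc ⬝ᵥ v) < 0 := mul_neg_of_pos_of_neg hεpos hv2
        linarith
      · have hmi := hm i' hi
        have hA : (0:ℝ) < |x i'.castSucc ⬝ᵥ v| + 1 := by positivity
        have h1 : ε * (x i'.castSucc ⬝ᵥ v) ≤ ε * |x i'.castSucc ⬝ᵥ v| :=
          mul_le_mul_of_nonneg_left (le_abs_self _) hεpos.le
        have h2 : ε * |x i'.castSucc ⬝ᵥ v| < ε * (|x i'.castSucc ⬝ᵥ v| + 1) := by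
          nlinarith
        have h3 : ε * (|x i'.castSucc ⬝ᵥ v| + 1) ≤ m i' := by
          have := hεle i'
          rw [hf_def] at this
          simp only [if_neg hi] at this
          calc ε * (|x i'.castSucc ⬝ᵥ v| + 1)
              ≤ (m i' / (|x i'.castSucc ⬝ᵥ v| + 1)) * (|x i'.castSucc ⬝ᵥ v| + 1) :=
                mul_le_mul_of_nonneg_right this hA.le
            _ = m i' := div_mul_cancel₀ _ hA.ne'
        have : m i' = x i'.castSucc ⬝ᵥ w i' - x i'.castSucc ⬝ᵥ w ik := rfl
        linarith
    | cast j' =>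
      rw [Fin.snoc_castSucc]
      exact hcorrect i' j' (fun h => hji (by rw [h]))
end

section
/- Fix an alphabet X of tokens with |X| = m and a template t of length n over wildcards (a function from positions [n] to a wildcard set), and let D(t) be the set of all sequences sub(t, s) obtained from injective substitution maps s from the wildcards of t into X. Then for every position j ∈ [n] and every token x ∈ X, the number of sequences in D(t) whose j-th token equals x is |D(t)| / m. -/
/-- The set of sequences generated by substituting the wildcards of a
template `t` by injective maps into the token alphabet `X`. -/
def templateSeqs {W X : Type*} [Fintype W] [DecidableEq W] [Fintype X] [DecidableEq X]
    {n : ℕ} (t : Fin n → W) : Finset (Fin n → X) :=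
  (Finset.univ.filter (Function.Injective : (W → X) → Prop)).image
    (fun s => fun i => s (t i))

lemma mem_templateSeqs_iff {W X : Type*} [Fintype W] [DecidableEq W] [Fintype X] [DecidableEq X]
    {n : ℕ} (t : Fin n → W) (f : Fin n → X) :
    f ∈ templateSeqs (X := X) t ↔ ∃ s : W → X, Function.Injective s ∧ (fun i => s (t i)) = f := by
  simp [templateSeqs]

lemma perm_mem_templateSeqs {W X : Type*} [Fintype W] [DecidableEq W] [Fintype X] [DecidableEq X]
    {n : ℕ} (t : Fin n → W) (σ : Equiv.Perm X) {f : Fin n → X}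
    (hf : f ∈ templateSeqs (X := X) t) : (fun i => σ (f i)) ∈ templateSeqs (X := X) t := by
  rw [mem_templateSeqs_iff] at hf ⊢
  obtain ⟨s, hs, hsf⟩ := hf
  exact ⟨σ ∘ s, σ.injective.comp hs, by funext i; simp [← hsf]⟩

lemma fiber_card_eq {W X : Type*} [Fintype W] [DecidableEq W] [Fintype X] [DecidableEq X]
    {n : ℕ} (t : Fin n → W) (j : Fin n) (x y : X) :
    ((templateSeqs (X := X) t).filter (fun f => f j = x)).card =
      ((templateSeqs (X := X) t).filter (fun f => f j = y)).card := by
  apply Finset.card_bij' (fun f _ => fun i => Equiv.swap x y (f i))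
    (fun g _ => fun i => Equiv.swap x y (g i))
  · intro f hf
    rw [Finset.mem_filter] at hf ⊢
    exact ⟨perm_mem_templateSeqs t _ hf.1, by simp [hf.2]⟩
  · intro g hg
    rw [Finset.mem_filter] at hg ⊢
    refine ⟨perm_mem_templateSeqs t _ hg.1, by simp [hg.2]⟩
  · intro f _; funext i; simp
  · intro g _; funext i; simp

theorem stmt_6 {W X : Type*} [Fintype W] [DecidableEq W] [Fintype X] [DecidableEq X]
    {n m : ℕ} (hm : Fintype.card X = m) (t : Fin n → W)
    (ht : Function.Surjective t) (j : Fin n) (x : X) :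
    m * ((templateSeqs (X := X) t).filter (fun f => f j = x)).card =
      (templateSeqs (X := X) t).card := by
  have htotal : (templateSeqs (X := X) t).card =
      ∑ y : X, ((templateSeqs (X := X) t).filter (fun f => f j = y)).card := by
    exact Finset.card_eq_sum_card_fiberwise (fun f _ => Finset.mem_univ (f j))
  rw [htotal]
  have : ∀ y : X, ((templateSeqs (X := X) t).filter (fun f => f j = y)).card =
      ((templateSeqs (X := X) t).filter (fun f => f j = x)).card :=
    fun y => fiber_card_eq t j y x
  rw [Finset.sum_congr rfl (fun y _ => this y), Finset.sum_const, Finset.card_univ, hm,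
    smul_eq_mul]
end

section
/- Let X be a finite alphabet and t, t' two templates of length n with sequence sets D(t), D(t') of sizes N = |D(t)|, N' = |D(t')|. Then, counting with multiplicity, for every position j ∈ [n] and token x ∈ X, the number of occurrences of x at position j in N' copies of D(t) equals the number of occurrences of x at position j in N copies of D(t'), both equal to N·N'/|X|. -/
lemma comp_inj {W X : Type*} {n : ℕ} (t : Fin n → W) (ht : Function.Surjective t) :
    Function.Injective (fun s : W → X => fun i => s (t i)) := by
  intro a b h
  funext w
  obtain ⟨i, rfl⟩ := ht w
  exact congrFun h i

lemma fiber_card_const {W X : Type*} [Fintype W] [DecidableEq W] [Fintype X] [DecidableEq X]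
    (w : W) (x y : X) :
    (((Finset.univ.filter (Function.Injective : (W → X) → Prop))).filter
        (fun s => s w = y)).card =
    (((Finset.univ.filter (Function.Injective : (W → X) → Prop))).filter
        (fun s => s w = x)).card := by
  apply Finset.card_bij' (fun s _ => (Equiv.swap x y) ∘ s) (fun s _ => (Equiv.swap x y) ∘ s)
  · intro s hs
    simp only [Finset.mem_filter, Finset.mem_univ, true_and] at hs ⊢
    exact ⟨(Equiv.swap x y).injective.comp hs.1, by simp [hs.2]⟩
  · intro s hs
    simp only [Finset.mem_filter, Finset.mem_univ, true_and] at hs ⊢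
    exact ⟨(Equiv.swap x y).injective.comp hs.1, by simp [hs.2, Equiv.swap_apply_right]⟩
  · intro s _; funext v; simp
  · intro s _; funext v; simp

lemma key {W X : Type*} [Fintype W] [DecidableEq W] [Fintype X] [DecidableEq X]
    {n : ℕ} (t : Fin n → W) (ht : Function.Surjective t) (j : Fin n) (x : X) :
    Fintype.card X * ((templateSeqs (X := X) t).filter (fun f => f j = x)).card
      = (templateSeqs (X := X) t).card := by
  classical
  set I := (Finset.univ.filter (Function.Injective : (W → X) → Prop)) with hI
  have hinj := comp_inj (X := X) t ht
  have h1 : (templateSeqs (X := X) t).card = I.card :=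
    Finset.card_image_of_injective _ hinj
  have h2 : ((templateSeqs (X := X) t).filter (fun f => f j = x)).card
      = (I.filter (fun s => s (t j) = x)).card := by
    rw [templateSeqs, ← hI, Finset.filter_image, Finset.card_image_of_injective _ hinj]
  rw [h1, h2]
  have hsum : I.card = ∑ y : X, (I.filter (fun s => s (t j) = y)).card :=
    Finset.card_eq_sum_card_fiberwise (fun s _ => Finset.mem_univ (s (t j)))
  rw [hsum]
  rw [Finset.sum_congr rfl (fun y _ => fiber_card_const (t j) x y)]
  simp [Finset.sum_const, mul_comm]
  exact Or.inl (congrArg Finset.card (by ext s; simp [hI]))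

theorem stmt_7 {W W' X : Type*} [Fintype W] [DecidableEq W] [Fintype W'] [DecidableEq W']
    [Fintype X] [DecidableEq X]
    {n : ℕ} (t : Fin n → W) (t' : Fin n → W')
    (ht : Function.Surjective t) (ht' : Function.Surjective t')
    (N N' : ℕ) (hN : N = (templateSeqs (X := X) t).card)
    (hN' : N' = (templateSeqs (X := X) t').card)
    (j : Fin n) (x : X) :
    N' * ((templateSeqs (X := X) t).filter (fun f => f j = x)).card =
      N * ((templateSeqs (X := X) t').filter (fun f => f j = x)).card ∧
    Fintype.card X * (N' * ((templateSeqs (X := X) t).filter (fun f => f j = x)).card) = N * N' ∧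
    Fintype.card X * (N * ((templateSeqs (X := X) t').filter (fun f => f j = x)).card) = N * N' := by
  have h1 : Fintype.card X * ((templateSeqs (X := X) t).filter (fun f => f j = x)).card = N := by
    rw [hN]; exact key t ht j x
  have h2 : Fintype.card X * ((templateSeqs (X := X) t').filter (fun f => f j = x)).card = N' := by
    rw [hN']; exact key t' ht' j x
  set c := ((templateSeqs (X := X) t).filter (fun f => f j = x)).card
  set c' := ((templateSeqs (X := X) t').filter (fun f => f j = x)).card
  have ha : Fintype.card X * (N' * c) = N * N' := by
    rw [mul_left_comm, h1, mul_comm]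
  have hb : Fintype.card X * (N * c') = N * N' := by
    rw [mul_left_comm, h2]
  refine ⟨?_, ha, hb⟩
  rcases Nat.eq_zero_or_pos (Fintype.card X) with h0 | hpos
  · have : N = 0 := by rw [← h1, h0, zero_mul]
    have : N' = 0 := by rw [← h2, h0, zero_mul]
    simp_all
  · exact Nat.eq_of_mul_eq_mul_left hpos (ha.trans hb.symm)
end

section
/- Let X be a finite token set, W_V ∈ R^{c×d}, emb : X → R^d, and σ'(s, x) = exp(emb(s)^T W_QK emb(x)) for some W_QK. Suppose sequences X^{(0)}, …, X^{(N-1)} ∈ X^n all end with the same token r and are dependent with integer coefficients λ_i. Define λ'_i = λ_i · Σ_{j=0}^{n-1} σ'(X^{(i)}_j, r) and the softmax-attention output o^{(i)} = emb(r) + (Σ_j W_V emb(X^{(i)}_j) σ'(X^{(i)}_j, r)) / (Σ_j σ'(X^{(i)}_j, r)). Then Σ_{i=0}^{N-1} λ'_i o^{(i)} = 0. -/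
open Finset Matrix

theorem stmt_18 {X : Type*} [DecidableEq X] {d n N : ℕ}
    (emb : X → Fin d → ℝ) (WV WQK : Matrix (Fin d) (Fin d) ℝ)
    (σ' : X → X → ℝ)
    (hσ : ∀ s x : X, σ' s x = Real.exp (emb s ⬝ᵥ WQK.mulVec (emb x)))
    (Xs : Fin N → Fin (n + 1) → X) (r : X)
    (hr : ∀ i, Xs i (Fin.last n) = r)
    (lam : Fin N → ℤ)
    (hdep : ∀ (j : Fin (n + 1)) (x : X),
      ∑ i ∈ univ.filter (fun i => Xs i j = x), lam i = 0)
    (lam' : Fin N → ℝ)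
    (hlam' : ∀ i, lam' i = (lam i : ℝ) * ∑ j : Fin (n + 1), σ' (Xs i j) r)
    (o : Fin N → Fin d → ℝ)
    (ho : ∀ i, o i = emb r +
      (∑ j : Fin (n + 1), σ' (Xs i j) r • WV.mulVec (emb (Xs i j))) /
        (fun _ => ∑ j : Fin (n + 1), σ' (Xs i j) r)) :
    ∑ i : Fin N, lam' i • o i = 0 := by
  classical
  have key : ∀ (j : Fin (n + 1)) (F : X → ℝ),
      ∑ i : Fin N, (lam i : ℝ) * F (Xs i j) = 0 := by
    intro j F
    rw [← Finset.sum_fiberwise_of_maps_to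
        (fun i _ => Finset.mem_image_of_mem (fun i => Xs i j) (Finset.mem_univ i))
        (fun i => (lam i : ℝ) * F (Xs i j))]
    refine Finset.sum_eq_zero fun x _ => ?_
    calc ∑ i ∈ univ.filter (fun i => Xs i j = x), (lam i : ℝ) * F (Xs i j)
        = ∑ i ∈ univ.filter (fun i => Xs i j = x), (lam i : ℝ) * F x := by
          refine Finset.sum_congr rfl fun i hi => ?_
          rw [(Finset.mem_filter.mp hi).2]
      _ = (∑ i ∈ univ.filter (fun i => Xs i j = x), (lam i : ℝ)) * F x := by
          rw [Finset.sum_mul]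
      _ = 0 := by rw [← Int.cast_sum, hdep j x, Int.cast_zero, zero_mul]
  set D : Fin N → ℝ := fun i => ∑ j : Fin (n + 1), σ' (Xs i j) r with hD
  have hDpos : ∀ i, D i ≠ 0 := fun i => ne_of_gt <|
    Finset.sum_pos (fun j _ => by rw [hσ]; exact Real.exp_pos _) ⟨0, Finset.mem_univ _⟩
  funext k
  have expand : ∀ i, (lam' i • o i) k
      = (lam i : ℝ) * D i * emb r k
        + (lam i : ℝ) * ∑ j : Fin (n + 1), σ' (Xs i j) r * WV.mulVec (emb (Xs i j)) k := by
    intro i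
    have hok : o i k = emb r k
        + (∑ j : Fin (n + 1), σ' (Xs i j) r * WV.mulVec (emb (Xs i j)) k) / D i := by
      rw [ho i]
      simp [Finset.sum_apply, hD]
    rw [Pi.smul_apply, hok, hlam' i, smul_eq_mul]
    have hne : D i ≠ 0 := hDpos i
    rw [hD] at hne ⊢
    field_simp
  rw [Finset.sum_apply]
  simp only [expand]
  rw [Finset.sum_add_distrib]
  have h1 : ∑ i : Fin N, (lam i : ℝ) * D i * emb r k = 0 := by
    have hz : ∑ i : Fin N, (lam i : ℝ) * D i = 0 := by
      calc ∑ i : Fin N, (lam i : ℝ) * D i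
          = ∑ i : Fin N, ∑ j : Fin (n + 1), (lam i : ℝ) * σ' (Xs i j) r := by
            simp [hD, Finset.mul_sum]
        _ = ∑ j : Fin (n + 1), ∑ i : Fin N, (lam i : ℝ) * σ' (Xs i j) r :=
            Finset.sum_comm
        _ = 0 := Finset.sum_eq_zero fun j _ => key j (fun x => σ' x r)
    rw [← Finset.sum_mul, hz, zero_mul]
  have h2 : ∑ i : Fin N,
      (lam i : ℝ) * ∑ j : Fin (n + 1), σ' (Xs i j) r * WV.mulVec (emb (Xs i j)) k = 0 := by
    calc ∑ i : Fin N,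
        (lam i : ℝ) * ∑ j : Fin (n + 1), σ' (Xs i j) r * WV.mulVec (emb (Xs i j)) k
        = ∑ j : Fin (n + 1), ∑ i : Fin N,
            (lam i : ℝ) * (σ' (Xs i j) r * WV.mulVec (emb (Xs i j)) k) := by
          rw [← Finset.sum_comm]
          simp [Finset.mul_sum]
      _ = 0 := Finset.sum_eq_zero fun j _ =>
          key j (fun x => σ' x r * WV.mulVec (emb x) k)
  rw [h1, h2, add_zero]
  simp
end
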